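/- Let F be a finite chordal polynomial set in K[x_1,...,x_n] such that x_1 < ... < x_n is a perfect elimination ordering of G(F). If a pair (P, Q) of finite polynomial sets is obtained from the pair (F, ∅) by finitely many Wang steps and the nonzero elements of P are nonconstant with pairwise distinct leading variables, so that they form a triangular set T when ordered by leading variable, then G(T) ⊆ G(F). -/

import Mathlib

open MvPolynomial

variable {K : Type*} [Field K] {n : ℕ}

/-- The set of variables effectively appearing in a polynomial. -/
def psupp (F : MvPolynomial (Fin n) K) : Set (Fin n) := ↑F.vars

/-- The set of variables appearing in a set of polynomials. -/
def ssupp (P : Set (MvPolynomial (Fin n) K)) : Set (Fin n) :=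
  ⋃ F ∈ P, psupp F

/-- Adjacency in the associated graph `G(P)`: `p ≠ q` and some polynomial of `P`
contains both variables. -/
def adjG (P : Set (MvPolynomial (Fin n) K)) (p q : Fin n) : Prop :=
  p ≠ q ∧ ∃ F ∈ P, p ∈ psupp F ∧ q ∈ psupp F

/-- `G(P) ⊆ G(Q)`: every edge of `G(P)` is an edge of `G(Q)`. -/
def subG (P Q : Set (MvPolynomial (Fin n) K)) : Prop :=
  ∀ p q, adjG P p q → adjG Q p q

/-- The natural ordering `x_1 < ... < x_n` of the variables is a perfect elimination
ordering of `G(P)`; in particular `G(P)` is chordal. -/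
def isPEO (P : Set (MvPolynomial (Fin n) K)) : Prop :=
  ∀ p q k : Fin n, p < k → q < k → p ≠ q → adjG P p k → adjG P q k → adjG P p q

/-- `F` is nonconstant with leading variable `x_k`. -/
def hasLv (F : MvPolynomial (Fin n) K) (k : Fin n) : Prop :=
  k ∈ psupp F ∧ ∀ j ∈ psupp F, j ≤ k

/-- `P^(k)`: the polynomials of `P` with leading variable `x_k`. -/
def levelSet (P : Set (MvPolynomial (Fin n) K)) (k : Fin n) :
    Set (MvPolynomial (Fin n) K) :=
  {F | F ∈ P ∧ hasLv F k}

/-- A triangular set: a list of nonconstant polynomials with strictly increasing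
leading variables. -/
def IsTriangularSet (L : List (MvPolynomial (Fin n) K)) : Prop :=
  (∀ F ∈ L, (psupp F).Nonempty) ∧
    L.Chain' fun F G => ∃ a b, hasLv F a ∧ hasLv G b ∧ a < b

/-- A Wang step: transform a pair `(P, Q)` of polynomial sets by choosing `k` with
`P^(k) ≠ ∅` and `T ∈ P^(k)`, and either (left branch) passing to
`((P \ P^(k)) ∪ {T} ∪ R, Q ∪ {I})` for a finite set `R` with
`supp R ⊆ supp (P^(k))` and a polynomial `I` with `supp I ⊆ supp T`, or
(right branch) passing to `((P \ {T}) ∪ {I, R'}, Q)` for polynomials `I, R'` with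
`supp I ⊆ supp T` and `supp R' ⊆ supp T`. -/
def WangStep (PQ PQ' :
    Set (MvPolynomial (Fin n) K) × Set (MvPolynomial (Fin n) K)) : Prop :=
  ∃ (k : Fin n) (T : MvPolynomial (Fin n) K), T ∈ levelSet PQ.1 k ∧
    ((∃ (R : Set (MvPolynomial (Fin n) K)) (I : MvPolynomial (Fin n) K),
        R.Finite ∧ ssupp R ⊆ ssupp (levelSet PQ.1 k) ∧ psupp I ⊆ psupp T ∧
        PQ'.1 = (PQ.1 \ levelSet PQ.1 k) ∪ {T} ∪ R ∧ PQ'.2 = PQ.2 ∪ {I}) ∨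
      (∃ I R' : MvPolynomial (Fin n) K, psupp I ⊆ psupp T ∧ psupp R' ⊆ psupp T ∧
        PQ'.1 = (PQ.1 \ {T}) ∪ {I, R'} ∧ PQ'.2 = PQ.2))


lemma adjG_symm' {P : Set (MvPolynomial (Fin n) K)} {p q : Fin n}
    (h : adjG P p q) : adjG P q p :=
  ⟨h.1.symm, h.2.imp fun _ hF => ⟨hF.1, hF.2.2, hF.2.1⟩⟩

lemma adj_levelSet {Fs : Set (MvPolynomial (Fin n) K)} (hpeo : isPEO Fs)
    {P : Set (MvPolynomial (Fin n) K)} (hsub : subG P Fs) (k : Fin n)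
    {p q : Fin n} (hp : p ∈ ssupp (levelSet P k)) (hq : q ∈ ssupp (levelSet P k))
    (hpq : p ≠ q) : adjG Fs p q := by
  obtain ⟨F, hF, hpF⟩ := Set.mem_iUnion₂.1 hp
  obtain ⟨G, hG, hqG⟩ := Set.mem_iUnion₂.1 hq
  obtain ⟨hFP, hkF, hleF⟩ := hF
  obtain ⟨hGP, hkG, hleG⟩ := hG
  have hpk : p ≤ k := hleF p hpF
  have hqk : q ≤ k := hleG q hqG
  rcases eq_or_lt_of_le hpk with rfl | hplt
  · exact adjG_symm' (hsub q p ⟨hpq.symm, G, hGP, hqG, hkG⟩)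
  · rcases eq_or_lt_of_le hqk with rfl | hqlt
    · exact hsub p q ⟨hpq, F, hFP, hpF, hkF⟩
    · exact hpeo p q k hplt hqlt hpq
        (hsub p k ⟨hplt.ne, F, hFP, hpF, hkF⟩)
        (hsub q k ⟨hqlt.ne, G, hGP, hqG, hkG⟩)

lemma wang_invariant {Fs : Set (MvPolynomial (Fin n) K)} (hFfin : Fs.Finite)
    (hpeo : isPEO Fs)
    (PQ : Set (MvPolynomial (Fin n) K) × Set (MvPolynomial (Fin n) K))
    (h : Relation.ReflTransGen WangStep (Fs, (∅ : Set (MvPolynomial (Fin n) K))) PQ) :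
    PQ.1.Finite ∧ subG PQ.1 Fs := by
  induction h with
  | refl => exact ⟨hFfin, fun p q hpq => hpq⟩
  | tail _ hstep ih =>
    obtain ⟨hfin, hsub⟩ := ih
    obtain ⟨k, T, hT, hbranch⟩ := hstep
    rcases hbranch with ⟨R, I, hRfin, hRsupp, _, h1, _⟩ | ⟨I, R', hI, hR', h1, _⟩
    · constructor
      · rw [h1]
        exact ((hfin.diff).union (Set.finite_singleton T)).union hRfin
      · intro p q ⟨hpq, F, hFmem, hpF, hqF⟩
        rw [h1] at hFmem
        rcases hFmem with (hFd | rfl) | hFR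
        · exact hsub p q ⟨hpq, F, hFd.1, hpF, hqF⟩
        · exact hsub p q ⟨hpq, F, hT.1, hpF, hqF⟩
        · exact adj_levelSet hpeo hsub k
            (hRsupp (Set.mem_iUnion₂.2 ⟨F, hFR, hpF⟩))
            (hRsupp (Set.mem_iUnion₂.2 ⟨F, hFR, hqF⟩)) hpq
    · constructor
      · rw [h1]
        exact (hfin.diff).union ((Set.finite_singleton R').insert I)
      · intro p q ⟨hpq, F, hFmem, hpF, hqF⟩
        rw [h1] at hFmem
        rcases hFmem with hFd | (rfl | rfl)
        · exact hsub p q ⟨hpq, F, hFd.1, hpF, hqF⟩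
        · exact hsub p q ⟨hpq, T, hT.1, hI hpF, hI hqF⟩
        · exact hsub p q ⟨hpq, T, hT.1, hR' hpF, hR' hqF⟩

lemma hasLv_max' (G : MvPolynomial (Fin n) K) (h : G.vars.Nonempty) :
    hasLv G (G.vars.max' h) :=
  ⟨G.vars.max'_mem h, fun j hj => G.vars.le_max' j hj⟩

lemma val_max' (G : MvPolynomial (Fin n) K) (h : G.vars.Nonempty) :
    (G.vars.max' h).val = G.vars.sup Fin.val := by
  apply le_antisymm
  · exact Finset.le_sup (G.vars.max'_mem h)
  · exact Finset.sup_le fun j hj => G.vars.le_max' j hj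

lemma exists_sorted_list {α : Type*} [DecidableEq α] (S : Finset α) (f : α → ℕ)
    (hinj : ∀ a ∈ S, ∀ b ∈ S, a ≠ b → f a ≠ f b) :
    ∃ L : List α, (∀ G, G ∈ L ↔ G ∈ S) ∧ L.Pairwise fun a b => f a < f b := by
  induction S using Finset.strongInduction with
  | _ S ih =>
    rcases S.eq_empty_or_nonempty with rfl | hne
    · exact ⟨[], by simp, by simp⟩
    · obtain ⟨a, haS, hmin⟩ := S.exists_min_image f hne
      obtain ⟨L, hL, hp⟩ := ih (S.erase a) (Finset.erase_ssubset haS)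
        (fun x hx y hy => hinj x (Finset.mem_of_mem_erase hx) y (Finset.mem_of_mem_erase hy))
      refine ⟨a :: L, ?_, ?_⟩
      · intro G
        rcases Classical.em (G = a) with rfl | hGa
        · simp [haS]
        · simp [hL, Finset.mem_erase, hGa]
      · refine List.pairwise_cons.2 ⟨fun b hb => ?_, hp⟩
        have hbS := (hL b).1 hb
        have hba : b ≠ a := (Finset.mem_erase.1 hbS).1
        exact lt_of_le_of_ne (hmin b (Finset.mem_of_mem_erase hbS))
          (hinj a haS b (Finset.mem_of_mem_erase hbS) hba.symm)

/-- let `Fs` be a finite chordal polynomial set whose natural variable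
ordering is a perfect elimination ordering, and let `(P, Q)` be obtained from
`(Fs, ∅)` by finitely many Wang steps.  If the nonzero elements of `P` are
nonconstant with pairwise distinct leading variables, then they form, ordered by
leading variable, a triangular set `L` with `G(L) ⊆ G(Fs)`. -/
theorem statement9 {K : Type*} [Field K] {n : ℕ}
    (Fs : Set (MvPolynomial (Fin n) K)) (hFfin : Fs.Finite) (hpeo : isPEO Fs)
    (P Q : Set (MvPolynomial (Fin n) K))
    (h : Relation.ReflTransGen WangStep (Fs, ∅) (P, Q))
    (hnc : ∀ G ∈ P, G ≠ 0 → (psupp G).Nonempty)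
    (hdist : ∀ G ∈ P, ∀ H ∈ P, G ≠ 0 → H ≠ 0 → G ≠ H →
      ∀ a b : Fin n, hasLv G a → hasLv H b → a ≠ b) :
    ∃ L : List (MvPolynomial (Fin n) K),
      (∀ G, G ∈ L ↔ G ∈ P ∧ G ≠ 0) ∧ IsTriangularSet L ∧
      subG {G | G ∈ L} Fs := by
  
  classical
  obtain ⟨hPfin, hsub⟩ := wang_invariant hFfin hpeo (P, Q) h
  have hSfin : ({G | G ∈ P ∧ G ≠ 0} : Set (MvPolynomial (Fin n) K)).Finite :=
    hPfin.subset fun G hG => hG.1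
  set S := hSfin.toFinset with hSdef
  have hmemS : ∀ G, G ∈ S ↔ G ∈ P ∧ G ≠ 0 := fun G => hSfin.mem_toFinset
  have hvne : ∀ G ∈ S, G.vars.Nonempty := by
    intro G hG
    obtain ⟨hGP, hG0⟩ := (hmemS G).1 hG
    obtain ⟨x, hx⟩ := hnc G hGP hG0
    exact ⟨x, hx⟩
  have hinj : ∀ a ∈ S, ∀ b ∈ S, a ≠ b →
      (fun G : MvPolynomial (Fin n) K => G.vars.sup Fin.val) a ≠
      (fun G : MvPolynomial (Fin n) K => G.vars.sup Fin.val) b := by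
    intro a ha b hb hab
    obtain ⟨haP, ha0⟩ := (hmemS a).1 ha
    obtain ⟨hbP, hb0⟩ := (hmemS b).1 hb
    have hva := hvne a ha
    have hvb := hvne b hb
    have := hdist a haP b hbP ha0 hb0 hab _ _ (hasLv_max' a hva) (hasLv_max' b hvb)
    simp only
    rw [← val_max' a hva, ← val_max' b hvb]
    exact fun hc => this (Fin.val_injective hc)
  obtain ⟨L, hLmem, hLpw⟩ := exists_sorted_list S (fun G => G.vars.sup Fin.val) hinj
  refine ⟨L, fun G => (hLmem G).trans (hmemS G), ⟨?_, ?_⟩, ?_⟩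
  · intro F hF
    obtain ⟨hFP, hF0⟩ := (hmemS F).1 ((hLmem F).1 hF)
    exact hnc F hFP hF0
  · refine List.Pairwise.isChain (List.Pairwise.imp_of_mem ?_ hLpw)
    intro a b ha hb hab
    have hva := hvne a ((hLmem a).1 ha)
    have hvb := hvne b ((hLmem b).1 hb)
    refine ⟨a.vars.max' hva, b.vars.max' hvb, hasLv_max' a hva, hasLv_max' b hvb, ?_⟩
    rw [Fin.lt_def, val_max' a hva, val_max' b hvb]
    exact hab
  · intro p q ⟨hpq, F, hFL, hpF, hqF⟩
    have hFP : F ∈ P := ((hmemS F).1 ((hLmem F).1 hFL)).1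
    exact hsub p q ⟨hpq, F, hFP, hpF, hqF⟩
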